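/- arXiv:1001.5008 — 2 statements merged into one kernel-verified Lean document; each statement's English description precedes it below -/
import Mathlib

section
/- With notation as above, the short exact sequence 0 → H → Λ³H → Λ³H/(θ̌∧H) → 0 of A-modules admits an A-linear splitting that is equivariant for the symplectic group Sp(H_A) if and only if g−1 is a unit in A. -/
open ExteriorAlgebra

section aux
variable {A : Type*} [CommRing A] {H : Type*} [AddCommGroup H] [Module A H]
variable (θ : H →ₗ[A] H →ₗ[A] A)

lemma skew_of_alt (hθ : ∀ x, θ x x = 0) (x y : H) : θ x y = - θ y x := by
  have h := hθ (x + y)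
  simp only [map_add, LinearMap.add_apply, hθ x, hθ y] at h
  linear_combination h

/-- Symplectic transvection along `v`. -/
def sympT (hθ : ∀ x, θ x x = 0) (v : H) : H ≃ₗ[A] H where
  toFun x := x + θ x v • v
  map_add' x y := by simp only [map_add, LinearMap.add_apply, add_smul]; abel
  map_smul' c x := by simp only [map_smul, LinearMap.smul_apply, smul_smul, smul_add,
    smul_eq_mul, RingHom.id_apply]
  invFun x := x - θ x v • v
  left_inv x := by
    simp only [map_add, map_smul, LinearMap.add_apply, LinearMap.smul_apply, hθ v, smul_eq_mul,
      mul_zero, add_zero, add_smul]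
    abel
  right_inv x := by
    simp only [map_sub, map_smul, LinearMap.sub_apply, LinearMap.smul_apply, hθ v, smul_eq_mul,
      mul_zero, sub_zero, sub_smul]
    abel

lemma sympT_apply (hθ : ∀ x, θ x x = 0) (v x : H) : sympT θ hθ v x = x + θ x v • v := rfl

lemma sympT_symplectic (hθ : ∀ x, θ x x = 0) (v x y : H) :
    θ (sympT θ hθ v x) (sympT θ hθ v y) = θ x y := by
  simp only [sympT_apply, map_add, map_smul, LinearMap.add_apply, LinearMap.smul_apply,
    hθ v, smul_eq_mul, mul_zero, add_zero]
  rw [skew_of_alt θ hθ v y]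
  ring

/-- The contraction `x∧y∧z ↦ θ(x,y)z - θ(x,z)y + θ(y,z)x` as an alternating map. -/
def contractAlt (hθ : ∀ x, θ x x = 0) : H [⋀^Fin 3]→ₗ[A] H where
  toFun v := θ (v 0) (v 1) • v 2 - θ (v 0) (v 2) • v 1 + θ (v 1) (v 2) • v 0
  map_update_add' v i x y := by
    fin_cases i <;>
      simp [Function.update, Fin.ext_iff, map_add, LinearMap.add_apply, add_smul, smul_add] <;>
      module
  map_update_smul' v i c x := by
    fin_cases i <;>
      simp [Function.update, Fin.ext_iff, map_smul, LinearMap.smul_apply, smul_smul,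
        smul_eq_mul, smul_add, smul_sub] <;>
      module
  map_eq_zero_of_eq' v i j h hij := by
    fin_cases i <;> fin_cases j <;> simp only [Fin.isValue] at h hij ⊢
    · exact absurd rfl hij
    · rw [← show v 0 = v 1 from h, hθ (v 0)]
      module
    · rw [← show v 0 = v 2 from h, hθ (v 0), skew_of_alt θ hθ (v 1) (v 0)]
      module
    · rw [show v 1 = v 0 from h, hθ (v 0)]
      module
    · exact absurd rfl hij
    · rw [← show v 1 = v 2 from h, hθ (v 1)]
      module
    · rw [show v 2 = v 0 from h, hθ (v 0), skew_of_alt θ hθ (v 1) (v 0)]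
      module
    · rw [show v 2 = v 1 from h, hθ (v 1)]
      module
    · exact absurd rfl hij


lemma iM3 (x y z : H) :
    ExteriorAlgebra.ιMulti A 3 ![x, y, z] = ι A x * ι A y * ι A z := by
  rw [ExteriorAlgebra.ιMulti_apply]
  simp [List.ofFn_succ, mul_assoc]

lemma wedge_fix (x y z v : H) (c d : A)
    (hc : c • (ι A v * ι A z) = 0) (hd : d • (ι A y * ι A v) = 0) :
    ι A x * (ι A y + c • ι A v) * (ι A z + d • ι A v) = ι A x * ι A y * ι A z := by
  have hvv : ι A v * ι A v = 0 := ι_sq_zero v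
  simp only [mul_add, add_mul, mul_assoc, mul_smul_comm, smul_mul_assoc, smul_smul]
  rw [hvv]
  simp only [smul_zero, mul_zero, add_zero]
  rw [show c • (ι A x * (ι A v * ι A z)) = 0 by rw [← mul_smul_comm, hc, mul_zero],
    show d • (ι A x * (ι A y * ι A v)) = 0 by rw [← mul_smul_comm, hd, mul_zero]]
  simp

lemma contractAlt_apply (hθ : ∀ x, θ x x = 0) (v : Fin 3 → H) :
    contractAlt θ hθ v = θ (v 0) (v 1) • v 2 - θ (v 0) (v 2) • v 1 + θ (v 1) (v 2) • v 0 :=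
  rfl

/-- The family of alternating maps: contraction in degree 3, zero elsewhere. -/
noncomputable def contractF (hθ : ∀ x, θ x x = 0) : ∀ i, H [⋀^Fin i]→ₗ[A] H := fun i =>
  match i with
  | 3 => contractAlt θ hθ
  | _ => 0

lemma contractF_apply_ne (hθ : ∀ x, θ x x = 0) {n : ℕ} (hn : n ≠ 3) :
    contractF θ hθ n = 0 := by
  match n with
  | 0 => rfl
  | 1 => rfl
  | 2 => rfl
  | 3 => exact absurd rfl hn
  | (n+4) => rfl

/-- The contraction on the exterior algebra. -/
noncomputable def contractE (hθ : ∀ x, θ x x = 0) : ExteriorAlgebra A H →ₗ[A] H :=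
  liftAlternating (contractF θ hθ)

lemma contractE_ιMulti3 (hθ : ∀ x, θ x x = 0) (v : Fin 3 → H) :
    contractE θ hθ (ιMulti A 3 v) =
      θ (v 0) (v 1) • v 2 - θ (v 0) (v 2) • v 1 + θ (v 1) (v 2) • v 0 := by
  rw [contractE, liftAlternating_apply_ιMulti]
  exact contractAlt_apply θ hθ v

lemma contractE_equivariant (hθ : ∀ x, θ x x = 0) (φ : H ≃ₗ[A] H)
    (hφ : ∀ x y, θ (φ x) (φ y) = θ x y) (x : ExteriorAlgebra A H) :
    contractE θ hθ (ExteriorAlgebra.map (φ : H →ₗ[A] H) x) = φ (contractE θ hθ x) := by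
  suffices h : contractE θ hθ ∘ₗ (ExteriorAlgebra.map (φ : H →ₗ[A] H)).toLinearMap
      = (φ : H →ₗ[A] H) ∘ₗ contractE θ hθ from LinearMap.congr_fun h x
  apply ExteriorAlgebra.lhom_ext
  intro n
  ext v
  simp only [LinearMap.compAlternatingMap_apply, LinearMap.comp_apply, AlgHom.toLinearMap_apply,
    ExteriorAlgebra.map_apply_ιMulti, LinearEquiv.coe_coe]
  rw [contractE, liftAlternating_apply_ιMulti, liftAlternating_apply_ιMulti]
  by_cases hn : n = 3
  · subst hn
    rw [show contractF θ hθ 3 = contractAlt θ hθ from rfl, contractAlt_apply, contractAlt_apply]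
    simp only [Function.comp_apply, hφ, map_add, map_sub, map_smul]
  · rw [contractF_apply_ne θ hθ hn]
    simp

end aux

/-- Lemma 9.4 (second sequence): the short exact sequence
`0 → H → Λ³H → Λ³H/(θ̌∧H) → 0` admits an `Sp(H_A)`-equivariant `A`-linear
splitting (equivalently, an `Sp(H_A)`-equivariant retraction `r : Λ³H → H` of
`j : x ↦ x ∧ θ̌`) if and only if `g − 1` is a unit in `A`. -/
theorem wedge_cubed_splits_iff_isUnit (A : Type*) [CommRing A] [IsDomain A]
    [CharZero A] (g : ℕ) (hg : 1 ≤ g)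
    (H : Type*) [AddCommGroup H] [Module A H]
    (bas : Module.Basis (Fin g ⊕ Fin g) A H)
    (θ : H →ₗ[A] H →ₗ[A] A)
    (hθalt : ∀ x : H, θ x x = 0)
    (hab : ∀ i j, θ (bas (Sum.inl i)) (bas (Sum.inr j)) = if i = j then 1 else 0)
    (haa : ∀ i j, θ (bas (Sum.inl i)) (bas (Sum.inl j)) = 0)
    (hbb : ∀ i j, θ (bas (Sum.inr i)) (bas (Sum.inr j)) = 0)
    (j : H →ₗ[A] (⋀[A]^3 H))
    (hj : ∀ x : H, (j x : ExteriorAlgebra A H) =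
      ∑ i : Fin g, ιMulti A 3 ![x, bas (Sum.inl i), bas (Sum.inr i)]) :
    (∃ r : (⋀[A]^3 H) →ₗ[A] H,
        (∀ x : H, r (j x) = x) ∧
        ∀ φ : H ≃ₗ[A] H, (∀ x y : H, θ (φ x) (φ y) = θ x y) →
          ∀ ω ω' : ⋀[A]^3 H,
            (ω' : ExteriorAlgebra A H) =
              ExteriorAlgebra.map (φ : H →ₗ[A] H) (ω : ExteriorAlgebra A H) →
            r ω' = φ (r ω)) ↔
      IsUnit ((g : A) - 1) := by
  constructor
  · rintro ⟨r, hret, hequiv⟩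
    -- basic facts about the basis
    have hb0 : ∀ (m : Fin g ⊕ Fin g) (c : A), c • bas m = 0 → c = 0 := by
      intro m c hc
      have h2 := congrArg (fun y => bas.repr y m) hc
      simpa using h2
    have hmem : ∀ v : Fin 3 → H, ExteriorAlgebra.ιMulti A 3 v ∈ ⋀[A]^3 H :=
      fun v => ExteriorAlgebra.ιMulti_range A 3 (Set.mem_range_self v)
    have hzero : ∀ x z : H, ExteriorAlgebra.ιMulti A 3 ![x, x, z] = 0 := by
      intro x z
      refine AlternatingMap.map_eq_zero_of_eq _ _ (i := 0) (j := 1) ?_ (by decide)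
      simp
    have hk0ex : (0 : ℕ) < g := by omega
    set k0 : Fin g := ⟨0, hk0ex⟩ with hk0
    -- case g = 1 : contradiction
    by_cases hg1 : g = 1
    · exfalso
      have hall : ∀ i : Fin g, i = k0 := by
        intro i; ext; omega
      have hj0 : (j (bas (Sum.inl k0)) : ExteriorAlgebra A H) = 0 := by
        rw [hj]
        refine Finset.sum_eq_zero fun i _ => ?_
        rw [hall i]
        exact hzero _ _
      have hjz : j (bas (Sum.inl k0)) = 0 := Subtype.ext hj0
      have h3 := hret (bas (Sum.inl k0))
      rw [hjz, map_zero] at h3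
      have h1 : (1 : A) • bas (Sum.inl k0) = 0 := by rw [one_smul, ← h3]
      exact one_ne_zero (hb0 _ _ h1)
    · have hg2 : 2 ≤ g := by omega
      set k1 : Fin g := ⟨1, by omega⟩ with hk1
      have hk10 : k1 ≠ k0 := by
        rw [hk1, hk0]
        simp [Fin.ext_iff]
      -- equivariance on monomials
      have hmono : ∀ (φ : H ≃ₗ[A] H), (∀ x y, θ (φ x) (φ y) = θ x y) → ∀ x y z : H,
          r ⟨ExteriorAlgebra.ιMulti A 3 ![φ x, φ y, φ z], hmem _⟩ =
            φ (r ⟨ExteriorAlgebra.ιMulti A 3 ![x, y, z], hmem _⟩) := by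
        intro φ hφ x y z
        refine hequiv φ hφ _ _ ?_
        show (ExteriorAlgebra.ιMulti A 3 ![φ x, φ y, φ z] : ExteriorAlgebra A H) = _
        rw [ExteriorAlgebra.map_apply_ιMulti]
        congr 1
        funext i; fin_cases i <;> simp
      -- the distinguished elements
      set e : Fin g → (⋀[A]^3 H) := fun i =>
        ⟨ExteriorAlgebra.ιMulti A 3 ![bas (Sum.inl k0), bas (Sum.inl i), bas (Sum.inr i)],
          hmem _⟩ with he
      -- the transvection constraint
      have hconstraint : ∀ v : H,
          θ (bas (Sum.inl k0)) v = 0 →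
          θ (bas (Sum.inl k1)) v • (ι A v * ι A (bas (Sum.inr k1))) = 0 →
          θ (bas (Sum.inr k1)) v • (ι A (bas (Sum.inl k1)) * ι A v) = 0 →
          θ (r (e k1)) v • v = 0 := by
        intro v h0 hc hd
        set T := sympT θ hθalt v with hT
        have hw : ExteriorAlgebra.ιMulti A 3
            ![T (bas (Sum.inl k0)), T (bas (Sum.inl k1)), T (bas (Sum.inr k1))] =
            ExteriorAlgebra.ιMulti A 3 ![bas (Sum.inl k0), bas (Sum.inl k1), bas (Sum.inr k1)] := by
          rw [iM3, iM3]
          have h1 : T (bas (Sum.inl k0)) = bas (Sum.inl k0) := by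
            rw [hT, sympT_apply, h0, zero_smul, add_zero]
          rw [h1, hT, sympT_apply θ hθalt v (bas (Sum.inl k1)),
            sympT_apply θ hθalt v (bas (Sum.inr k1))]
          rw [show (ι A) (bas (Sum.inl k1) + θ (bas (Sum.inl k1)) v • v)
              = ι A (bas (Sum.inl k1)) + θ (bas (Sum.inl k1)) v • ι A v by
            rw [map_add, map_smul]]
          rw [show (ι A) (bas (Sum.inr k1) + θ (bas (Sum.inr k1)) v • v)
              = ι A (bas (Sum.inr k1)) + θ (bas (Sum.inr k1)) v • ι A v by
            rw [map_add, map_smul]]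
          exact wedge_fix _ _ _ _ _ _ hc hd
        have heq := hmono T (sympT_symplectic θ hθalt v) (bas (Sum.inl k0)) (bas (Sum.inl k1))
          (bas (Sum.inr k1))
        have he2 : (⟨ExteriorAlgebra.ιMulti A 3
            ![T (bas (Sum.inl k0)), T (bas (Sum.inl k1)), T (bas (Sum.inr k1))], hmem _⟩ :
            ⋀[A]^3 H) = e k1 := Subtype.ext hw
        have he3 : (⟨ExteriorAlgebra.ιMulti A 3
            ![bas (Sum.inl k0), bas (Sum.inl k1), bas (Sum.inr k1)], hmem _⟩ :
            ⋀[A]^3 H) = e k1 := rfl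
        rw [he2, he3] at heq
        rw [hT, sympT_apply] at heq
        have h4 := heq.symm
        rwa [add_eq_left] at h4
      -- coefficients of r (e k1) vanish
      have hza : ∀ i : Fin g, θ (r (e k1)) (bas (Sum.inl i)) = 0 := by
        intro i
        refine hb0 (Sum.inl i) _ (hconstraint (bas (Sum.inl i)) (haa k0 i) ?_ ?_)
        · rw [haa k1 i, zero_smul]
        · rw [skew_of_alt θ hθalt, hab i k1]
          by_cases hik : i = k1
          · subst hik
            simp [ExteriorAlgebra.ι_sq_zero]
          · simp [hik]
      have hzb : ∀ i : Fin g, i ≠ k0 → θ (r (e k1)) (bas (Sum.inr i)) = 0 := by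
        intro i hi
        refine hb0 (Sum.inr i) _ (hconstraint (bas (Sum.inr i)) ?_ ?_ ?_)
        · rw [hab k0 i, if_neg (Ne.symm hi)]
        · rw [hab k1 i]
          by_cases hik : k1 = i
          · rw [← hik]
            simp [ExteriorAlgebra.ι_sq_zero]
          · simp [hik]
        · rw [hbb k1 i, zero_smul]
      -- translate to coordinates
      have hrepr_a : ∀ (x : H) (i : Fin g), θ x (bas (Sum.inl i)) = - bas.repr x (Sum.inr i) := by
        intro x i
        have hmaps : (θ.flip (bas (Sum.inl i)) : H →ₗ[A] A)
            = -((Finsupp.lapply (Sum.inr i) : (Fin g ⊕ Fin g →₀ A) →ₗ[A] A) ∘ₗ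
                (bas.repr : H ≃ₗ[A] (Fin g ⊕ Fin g →₀ A)).toLinearMap) := by
          refine Module.Basis.ext bas fun m => ?_
          cases m with
          | inl p =>
            simp [LinearMap.flip_apply, haa, Module.Basis.repr_self, Finsupp.single_apply]
          | inr p =>
            simp only [LinearMap.flip_apply, LinearMap.neg_apply, LinearMap.comp_apply,
              LinearEquiv.coe_toLinearMap, Module.Basis.repr_self, Finsupp.lapply_apply,
              Finsupp.single_apply]
            rw [skew_of_alt θ hθalt, hab]
            rcases eq_or_ne p i with h | h
            · simp [h]
            · simp [h, Ne.symm h]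
        exact DFunLike.congr_fun hmaps x
      have hrepr_b : ∀ (x : H) (i : Fin g), θ x (bas (Sum.inr i)) = bas.repr x (Sum.inl i) := by
        intro x i
        have hmaps : (θ.flip (bas (Sum.inr i)) : H →ₗ[A] A)
            = ((Finsupp.lapply (Sum.inl i) : (Fin g ⊕ Fin g →₀ A) →ₗ[A] A) ∘ₗ
                (bas.repr : H ≃ₗ[A] (Fin g ⊕ Fin g →₀ A)).toLinearMap) := by
          refine Module.Basis.ext bas fun m => ?_
          cases m with
          | inl p =>
            simp only [LinearMap.flip_apply, LinearMap.comp_apply,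
              LinearEquiv.coe_toLinearMap, Module.Basis.repr_self, Finsupp.lapply_apply,
              Finsupp.single_apply, hab]
            rcases eq_or_ne p i with h | h
            · simp [h]
            · simp [h, Ne.symm h]
          | inr p =>
            simp [LinearMap.flip_apply, hbb, Module.Basis.repr_self, Finsupp.single_apply]
        exact DFunLike.congr_fun hmaps x
      set c0 : A := bas.repr (r (e k1)) (Sum.inl k0) with hc0
      have hx : r (e k1) = c0 • bas (Sum.inl k0) := by
        apply bas.repr.injective
        ext m
        rw [map_smul, Module.Basis.repr_self]
        rcases m with p | p
        · by_cases hp : p = k0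
          · subst hp
            simp [Finsupp.single_apply, hc0]
          · have h5 : bas.repr (r (e k1)) (Sum.inl p) = 0 := by
              rw [← hrepr_b (r (e k1)) p]
              exact hzb p hp
            simp [h5, Finsupp.single_apply, Ne.symm hp]
        · have h5 : bas.repr (r (e k1)) (Sum.inr p) = 0 := by
            have h6 := hza p
            rw [hrepr_a] at h6
            exact neg_eq_zero.mp h6
          simp [h5, Finsupp.single_apply]
      -- all e i have the same image under r
      have hei : ∀ i : Fin g, i ≠ k0 → r (e i) = c0 • bas (Sum.inl k0) := by
        intro i hi
        set σ : (Fin g ⊕ Fin g) ≃ (Fin g ⊕ Fin g) :=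
          Equiv.sumCongr (Equiv.swap k1 i) (Equiv.swap k1 i) with hσ
        set φ : H ≃ₗ[A] H := bas.equiv bas σ with hφdef
        have hφb : ∀ m, φ (bas m) = bas (σ m) := fun m => bas.equiv_apply m bas σ
        have hφθ : LinearMap.compl₁₂ θ (φ : H →ₗ[A] H) (φ : H →ₗ[A] H) = θ := by
          refine LinearMap.ext_basis bas bas fun m m' => ?_
          simp only [LinearMap.compl₁₂_apply, LinearEquiv.coe_coe]
          rw [hφb m, hφb m']
          rcases m with p | p <;> rcases m' with q | q <;>
            simp only [hσ, Equiv.sumCongr_apply, Sum.map_inl, Sum.map_inr]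
          · rw [haa, haa]
          · rw [hab, hab]
            simp only [Equiv.apply_eq_iff_eq]
          · rw [skew_of_alt θ hθalt, skew_of_alt θ hθalt (bas (Sum.inr p)),
              hab, hab]
            simp only [Equiv.apply_eq_iff_eq]
          · rw [hbb, hbb]
        have hφ : ∀ x y, θ (φ x) (φ y) = θ x y := by
          intro x y
          have h7 := DFunLike.congr_fun (DFunLike.congr_fun hφθ x) y
          simpa using h7
        have hφ0 : φ (bas (Sum.inl k0)) = bas (Sum.inl k0) := by
          rw [hφb]
          simp only [hσ, Equiv.sumCongr_apply, Sum.map_inl]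
          rw [Equiv.swap_apply_of_ne_of_ne (Ne.symm hk10) (Ne.symm hi)]
        have hφ1 : φ (bas (Sum.inl k1)) = bas (Sum.inl i) := by
          rw [hφb]
          simp only [hσ, Equiv.sumCongr_apply, Sum.map_inl]
          rw [Equiv.swap_apply_left]
        have hφ2 : φ (bas (Sum.inr k1)) = bas (Sum.inr i) := by
          rw [hφb]
          simp only [hσ, Equiv.sumCongr_apply, Sum.map_inr]
          rw [Equiv.swap_apply_left]
        have hswap := hmono φ hφ (bas (Sum.inl k0)) (bas (Sum.inl k1)) (bas (Sum.inr k1))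
        have hvec : (⟨ExteriorAlgebra.ιMulti A 3
            ![φ (bas (Sum.inl k0)), φ (bas (Sum.inl k1)), φ (bas (Sum.inr k1))], hmem _⟩ :
            ⋀[A]^3 H) = e i := by
          refine Subtype.ext ?_
          show ExteriorAlgebra.ιMulti A 3 _ = ExteriorAlgebra.ιMulti A 3 _
          rw [hφ0, hφ1, hφ2]
        have he4 : (⟨ExteriorAlgebra.ιMulti A 3
            ![bas (Sum.inl k0), bas (Sum.inl k1), bas (Sum.inr k1)], hmem _⟩ :
            ⋀[A]^3 H) = e k1 := rfl
        rw [hvec, he4] at hswap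
        rw [hswap, hx, map_smul, hφ0]
      -- summing up
      have hsplit : j (bas (Sum.inl k0)) = ∑ i ∈ Finset.univ.erase k0, e i := by
        refine Subtype.ext ?_
        rw [hj]
        rw [show ((∑ i ∈ Finset.univ.erase k0, e i : ⋀[A]^3 H) : ExteriorAlgebra A H)
            = ∑ i ∈ Finset.univ.erase k0, (e i : ExteriorAlgebra A H) from
          AddSubmonoidClass.coe_finset_sum _ _]
        rw [← Finset.sum_erase_add _ _ (Finset.mem_univ k0)]
        rw [hzero]
        rw [add_zero]
      have hsum2 := hret (bas (Sum.inl k0))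
      rw [hsplit, map_sum] at hsum2
      rw [Finset.sum_congr rfl (fun i hi => hei i (Finset.ne_of_mem_erase hi))] at hsum2
      rw [Finset.sum_const, Finset.card_erase_of_mem (Finset.mem_univ k0), Finset.card_univ,
        Fintype.card_fin] at hsum2
      have hcast : ((g - 1 : ℕ) : A) • (c0 • bas (Sum.inl k0)) = bas (Sum.inl k0) := by
        rw [Nat.cast_smul_eq_nsmul]
        exact hsum2
      rw [Nat.cast_sub hg, Nat.cast_one, smul_smul] at hcast
      have h8 : (((g : A) - 1) * c0 - 1) • bas (Sum.inl k0) = 0 := by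
        rw [sub_smul, one_smul, hcast, sub_self]
      exact IsUnit.of_mul_eq_one c0 (sub_eq_zero.mp (hb0 _ _ h8))
  · rintro ⟨u, hu⟩
    refine ⟨(↑u⁻¹ : A) • ((contractE θ hθalt) ∘ₗ (⋀[A]^3 H).subtype), ?_, ?_⟩
    · intro x
      have hsum : ∀ x : H, ∑ i : Fin g,
          (θ x (bas (Sum.inl i)) • bas (Sum.inr i) - θ x (bas (Sum.inr i)) • bas (Sum.inl i))
          = -x := by
        intro x
        have hL : (∑ i : Fin g,
            (LinearMap.smulRight (θ.flip (bas (Sum.inl i))) (bas (Sum.inr i)) -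
             LinearMap.smulRight (θ.flip (bas (Sum.inr i))) (bas (Sum.inl i))))
            = -(LinearMap.id (R := A) (M := H)) := by
          refine Module.Basis.ext bas fun m => ?_
          cases m with
          | inl p =>
            simp only [LinearMap.sum_apply, LinearMap.sub_apply, LinearMap.smulRight_apply,
              LinearMap.flip_apply, haa, hab, zero_smul, zero_sub, LinearMap.neg_apply,
              LinearMap.id_apply]
            simp [ite_smul]
          | inr p =>
            simp only [LinearMap.sum_apply, LinearMap.sub_apply, LinearMap.smulRight_apply,
              LinearMap.flip_apply, hbb, zero_smul, sub_zero, LinearMap.neg_apply,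
              LinearMap.id_apply]
            have hba : ∀ i : Fin g, θ (bas (Sum.inr p)) (bas (Sum.inl i))
                = -(if i = p then 1 else 0) := by
              intro i
              rw [skew_of_alt θ hθalt, hab]
            simp [hba, ite_smul]
        have := LinearMap.congr_fun hL x
        simpa using this
      have hC : contractE θ hθalt ((j x : ExteriorAlgebra A H)) = ((g : A) - 1) • x := by
        rw [hj x, map_sum]
        have : ∀ i : Fin g, contractE θ hθalt (ιMulti A 3 ![x, bas (Sum.inl i), bas (Sum.inr i)])
            = (θ x (bas (Sum.inl i)) • bas (Sum.inr i)
               - θ x (bas (Sum.inr i)) • bas (Sum.inl i)) + x := by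
          intro i
          rw [contractE_ιMulti3]
          simp [hab]
        rw [Finset.sum_congr rfl fun i _ => this i, Finset.sum_add_distrib, hsum x,
          Finset.sum_const, Finset.card_univ, Fintype.card_fin]
        rw [sub_smul, one_smul]
        rw [← Nat.cast_smul_eq_nsmul A g x]
        abel
      simp only [LinearMap.smul_apply, LinearMap.comp_apply, Submodule.subtype_apply]
      rw [hC, smul_smul]
      rw [← hu, Units.inv_mul, one_smul]
    · intro φ hφ ω ω' hcoe
      simp only [LinearMap.smul_apply, LinearMap.comp_apply, Submodule.subtype_apply]
      rw [hcoe, contractE_equivariant θ hθalt φ hφ, ← map_smul]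
end

section
/- With notation as above, the short exact sequence 0 → A → Λ²H → Λ²H/(A·θ̌) → 0 of A-modules (where A → Λ²H sends 1 to θ̌) admits an Sp(H_A)-equivariant A-linear splitting if and only if g is a unit in A. -/
open ExteriorAlgebra

def thetaAlt {A : Type*} [CommRing A] {H : Type*} [AddCommGroup H] [Module A H]
    (θ : H →ₗ[A] H →ₗ[A] A) (hθalt : ∀ x : H, θ x x = 0) : H [⋀^Fin 2]→ₗ[A] A where
  toMultilinearMap :=
  { toFun := fun v => θ (v 0) (v 1)
    map_update_add' := by intro _ v i x y; fin_cases i <;> simp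
    map_update_smul' := by intro _ v i c x; fin_cases i <;> simp }
  map_eq_zero_of_eq' v i j hv hij := by
    fin_cases i <;> fin_cases j <;> simp_all [hθalt]

/-- Lemma 9.4 (first sequence): the short exact sequence
`0 → A → Λ²H → Λ²H/(A·θ̌) → 0`, where `A → Λ²H` sends `1` to `θ̌ = Σᵢ aᵢ∧bᵢ`,
admits an `Sp(H_A)`-equivariant `A`-linear splitting (equivalently an
`Sp(H_A)`-invariant retraction `r : Λ²H → A` with `r(θ̌) = 1`) if and only if
`g` is a unit in `A`. -/
theorem wedge_squared_splits_iff_isUnit (A : Type*) [CommRing A] [IsDomain A]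
    [CharZero A] (g : ℕ) (hg : 1 ≤ g)
    (H : Type*) [AddCommGroup H] [Module A H]
    (bas : Module.Basis (Fin g ⊕ Fin g) A H)
    (θ : H →ₗ[A] H →ₗ[A] A)
    (hθalt : ∀ x : H, θ x x = 0)
    (hab : ∀ i j, θ (bas (Sum.inl i)) (bas (Sum.inr j)) = if i = j then 1 else 0)
    (haa : ∀ i j, θ (bas (Sum.inl i)) (bas (Sum.inl j)) = 0)
    (hbb : ∀ i j, θ (bas (Sum.inr i)) (bas (Sum.inr j)) = 0)
    (θdual : ⋀[A]^2 H)
    (hθdual : (θdual : ExteriorAlgebra A H) =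
      ∑ i : Fin g, ιMulti A 2 ![bas (Sum.inl i), bas (Sum.inr i)]) :
    (∃ r : (⋀[A]^2 H) →ₗ[A] A,
        r θdual = 1 ∧
        ∀ φ : H ≃ₗ[A] H, (∀ x y : H, θ (φ x) (φ y) = θ x y) →
          ∀ ω ω' : ⋀[A]^2 H,
            (ω' : ExteriorAlgebra A H) =
              ExteriorAlgebra.map (φ : H →ₗ[A] H) (ω : ExteriorAlgebra A H) →
            r ω' = r ω) ↔
      IsUnit (g : A) := by
  classical
  have hg0 : 0 < g := hg
  set i0 : Fin g := ⟨0, hg0⟩ with hi0def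
  have hmem : ∀ i : Fin g, ιMulti A 2 ![bas (Sum.inl i), bas (Sum.inr i)] ∈ ⋀[A]^2 H :=
    fun i => ExteriorAlgebra.ιMulti_range A 2 ⟨_, rfl⟩
  set σ : Fin g → (⋀[A]^2 H) := fun i => ⟨_, hmem i⟩ with hσdef
  have hanti : ∀ x y : H, θ x y = - θ y x := by
    intro x y
    have h0 : θ y x + θ x y = 0 := by
      have := hθalt (x + y)
      simpa [map_add, hθalt x, hθalt y] using this
    exact eq_neg_of_add_eq_zero_right h0
  have hθd : θdual = ∑ i, σ i := by
    apply Subtype.coe_injective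
    show (θdual : ExteriorAlgebra A H) = ((∑ i, σ i : ⋀[A]^2 H) : ExteriorAlgebra A H)
    rw [hθdual]
    simp [hσdef]
  constructor
  · rintro ⟨r, hr1, hinv⟩
    have hswap : ∀ i : Fin g, r (σ i) = r (σ i0) := by
      intro i
      set e : Fin g ≃ Fin g := Equiv.swap i0 i with hedef
      set φ : H ≃ₗ[A] H := bas.equiv bas (Equiv.sumCongr e e) with hφdef
      have hφb : ∀ k, φ (bas k) = bas (Sum.map e e k) := by
        intro k
        simp [hφdef, Module.Basis.equiv_apply, Equiv.sumCongr_apply]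
      have hφ : ∀ x y : H, θ (φ x) (φ y) = θ x y := by
        have hL : LinearMap.compl₁₂ θ (φ : H →ₗ[A] H) (φ : H →ₗ[A] H) = θ := by
          apply bas.ext; intro k; apply bas.ext; intro l
          simp only [LinearMap.compl₁₂_apply, LinearEquiv.coe_coe, hφb]
          rcases k with k | k <;> rcases l with l | l
          · simp [haa]
          · simp [hab, e.injective.eq_iff]
          · rw [hanti, hanti (bas (Sum.inr k))]
            simp [hab, e.injective.eq_iff]
          · simp [hbb]
        intro x y
        have h1 := DFunLike.congr_fun hL x
        have h2 := DFunLike.congr_fun h1 y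
        simpa [LinearMap.compl₁₂_apply] using h2
      refine hinv φ hφ (σ i0) (σ i) ?_
      show ιMulti A 2 ![bas (Sum.inl i), bas (Sum.inr i)] =
        ExteriorAlgebra.map (φ : H →ₗ[A] H)
          (ιMulti A 2 ![bas (Sum.inl i0), bas (Sum.inr i0)])
      rw [ExteriorAlgebra.map_apply_ιMulti]
      congr 1
      funext j
      fin_cases j <;>
        simp [hφb, hedef, Equiv.swap_apply_left]
    have hkey : (1 : A) = (g : A) * r (σ i0) := by
      rw [← hr1, hθd, map_sum]
      have : ∀ i ∈ Finset.univ, r (σ i) = r (σ i0) := fun i _ => hswap i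
      rw [Finset.sum_congr rfl this, Finset.sum_const, Finset.card_univ,
        Fintype.card_fin, nsmul_eq_mul]
    exact IsUnit.of_mul_eq_one _ hkey.symm
  · rintro ⟨u, hu⟩
    set fam : ∀ i : ℕ, H [⋀^Fin i]→ₗ[A] A := fun i =>
      match i with
      | 2 => thetaAlt θ hθalt
      | _ => 0
      with hfamdef
    set L : ExteriorAlgebra A H →ₗ[A] A := liftAlternating fam with hLdef
    have hL2 : ∀ v : Fin 2 → H, L (ιMulti A 2 v) = θ (v 0) (v 1) := by
      intro v
      rw [hLdef, liftAlternating_apply_ιMulti]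
      rfl
    have hLinv : ∀ (φ : H ≃ₗ[A] H), (∀ x y : H, θ (φ x) (φ y) = θ x y) →
        ∀ x ∈ (⋀[A]^2 H), L (ExteriorAlgebra.map (φ : H →ₗ[A] H) x) = L x := by
      intro φ hφ x hx
      rw [← ExteriorAlgebra.ιMulti_span_fixedDegree] at hx
      induction hx using Submodule.span_induction with
      | mem y hy =>
        obtain ⟨v, rfl⟩ := hy
        rw [ExteriorAlgebra.map_apply_ιMulti, hL2, hL2]
        exact hφ _ _
      | zero => simp
      | add y z _ _ hy hz => simp [map_add, hy, hz]
      | smul c y _ hy => simp [map_smul, hy]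
    refine ⟨(↑u⁻¹ : A) • (L ∘ₗ (⋀[A]^2 H).subtype), ?_, ?_⟩
    · have : L (θdual : ExteriorAlgebra A H) = (g : A) := by
        rw [hθdual, map_sum]
        have : ∀ i ∈ Finset.univ, L (ιMulti A 2 ![bas (Sum.inl i), bas (Sum.inr i)])
            = (1 : A) := by
          intro i _
          rw [hL2]
          simpa using hab i i
        rw [Finset.sum_congr rfl this, Finset.sum_const, Finset.card_univ,
          Fintype.card_fin, nsmul_eq_mul, mul_one]
      simp only [LinearMap.smul_apply, LinearMap.comp_apply, Submodule.subtype_apply]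
      rw [this, ← hu, smul_eq_mul, Units.inv_mul]
    · intro φ hφ ω ω' hωω'
      simp only [LinearMap.smul_apply, LinearMap.comp_apply, Submodule.subtype_apply]
      rw [hωω', hLinv φ hφ _ ω.2]
end
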